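/- Let T ::= * | T ⇒ T be the set of simple types. Define the simply-typed lambda calculus as the intrinsically typed inductive family SLC : (T → Type) → (T → Type) with constructors Var : V t → SLC V t, Abs : SLC (V + {·:s}) t → SLC V (s ⇒ t), and App : SLC V (s ⇒ t) → SLC V s → SLC V t, where V + {·:s} denotes the context V extended by one fresh variable of type s. Define type-preserving simultaneous substitution bind : (∀ t, V t → SLC W t) → (∀ t, SLC V t → SLC W t) by structural recursion (lifting the substitution under Abs). Then (SLC, Var, bind) satisfies the monad laws: bind f (Var v) = f v; bind Var a = a; and bind g (bind f a) = bind (fun t v => bind g (f t v)) a. -/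

import Mathlib

/-- Simple types: `T ::= * | T ⇒ T`. -/
inductive Ty : Type
  | star : Ty
  | arr : Ty → Ty → Ty

/-- The context `V` extended by one fresh variable of type `s`. -/
def ext (V : Ty → Type) (s : Ty) : Ty → Type :=
  fun t => V t ⊕ PLift (t = s)

/-- Intrinsically typed simply-typed lambda calculus. -/
inductive SLC : (Ty → Type) → Ty → Type 1
  | Var {V : Ty → Type} {t : Ty} : V t → SLC V t
  | Abs {V : Ty → Type} {s t : Ty} : SLC (ext V s) t → SLC V (.arr s t)
  | App {V : Ty → Type} {s t : Ty} : SLC V (.arr s t) → SLC V s → SLC V t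

/-- Lifting a renaming to an extended context. -/
def extMap {V W : Ty → Type} (f : ∀ t, V t → W t) (s : Ty) :
    ∀ t, ext V s t → ext W s t :=
  fun t x => x.elim (fun v => .inl (f t v)) .inr

/-- Renaming of free variables (functoriality). -/
def SLC.rename : {V W : Ty → Type} → (∀ t, V t → W t) → ∀ {t}, SLC V t → SLC W t
  | _, _, f, _, .Var v => .Var (f _ v)
  | _, _, f, _, .Abs b => .Abs (b.rename (extMap f _))
  | _, _, f, _, .App a b => .App (a.rename f) (b.rename f)

/-- Lifting a substitution under a binder. -/
def SLC.lift {V W : Ty → Type} (f : ∀ t, V t → SLC W t) (s : Ty) :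
    ∀ t, ext V s t → SLC (ext W s) t :=
  fun t x =>
    match x with
    | .inl v => (f t v).rename (fun _ w => Sum.inl w)
    | .inr h => .Var (.inr h)

/-- Type-preserving simultaneous substitution. -/
def SLC.bind : {V W : Ty → Type} → (∀ t, V t → SLC W t) → ∀ {t}, SLC V t → SLC W t
  | _, _, f, _, .Var v => f _ v
  | _, _, f, _, .Abs b => .Abs (b.bind (SLC.lift f _))
  | _, _, f, _, .App a b => .App (a.bind f) (b.bind f)


theorem SLC.rename_rename {V W X : Ty → Type} (f : ∀ t, V t → W t)
    (g : ∀ t, W t → X t) {t} (a : SLC V t) :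
    (a.rename f).rename g = a.rename (fun t v => g t (f t v)) := by
  induction a generalizing W X with
  | Var v => rfl
  | Abs b ih =>
      simp only [SLC.rename, ih]
      congr 1
      congr 1
      funext t x
      cases x <;> rfl
  | App a b iha ihb => simp only [SLC.rename, iha, ihb]

theorem SLC.bind_rename {V W X : Ty → Type} (f : ∀ t, V t → W t)
    (g : ∀ t, W t → SLC X t) {t} (a : SLC V t) :
    (a.rename f).bind g = a.bind (fun t v => g t (f t v)) := by
  induction a generalizing W X with
  | Var v => rfl
  | Abs b ih =>
      simp only [SLC.rename, SLC.bind, ih]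
      congr 1
      congr 1
      funext t x
      cases x <;> rfl
  | App a b iha ihb => simp only [SLC.rename, SLC.bind, iha, ihb]

theorem SLC.rename_bind {V W X : Ty → Type} (f : ∀ t, V t → SLC W t)
    (g : ∀ t, W t → X t) {t} (a : SLC V t) :
    (a.bind f).rename g = a.bind (fun t v => (f t v).rename g) := by
  induction a generalizing W X with
  | Var v => rfl
  | Abs b ih =>
      simp only [SLC.bind, SLC.rename, ih]
      congr 1
      congr 1
      funext t x
      cases x with
      | inl v =>
          simp only [SLC.lift, SLC.rename_rename]
          exact SLC.rename_rename _ _ _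
      | inr h => rfl
  | App a b iha ihb => simp only [SLC.bind, SLC.rename, iha, ihb]

theorem SLC.bind_bind {V W X : Ty → Type} (f : ∀ t, V t → SLC W t)
    (g : ∀ t, W t → SLC X t) {t} (a : SLC V t) :
    (a.bind f).bind g = a.bind (fun t v => (f t v).bind g) := by
  induction a generalizing W X with
  | Var v => rfl
  | Abs b ih =>
      simp only [SLC.bind, ih]
      congr 1
      congr 1
      funext t x
      cases x with
      | inl v =>
          simp only [SLC.lift, SLC.bind_rename, SLC.rename_bind]
          exact SLC.bind_rename _ _ _
      | inr h => rfl
  | App a b iha ihb => simp only [SLC.bind, iha, ihb]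

theorem SLC.bind_var {V : Ty → Type} {t} (a : SLC V t) :
    SLC.bind (fun _ v => .Var v) a = a := by
  induction a with
  | Var v => rfl
  | Abs b ih =>
      simp only [SLC.bind]
      congr 1
      rw [show SLC.lift (V := _) (fun _ v => SLC.Var v) _ = (fun _ v => SLC.Var v) from ?_, ih]
      funext t x
      cases x <;> rfl
  | App a b iha ihb => simp only [SLC.bind, iha, ihb]

/-- `(SLC, Var, bind)` satisfies the three monad laws. -/
theorem SLC.monad_laws :
    (∀ {V W : Ty → Type} (f : ∀ t, V t → SLC W t) {t} (v : V t),
      SLC.bind f (.Var v) = f t v) ∧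
    (∀ {V : Ty → Type} {t} (a : SLC V t), SLC.bind (fun _ v => .Var v) a = a) ∧
    (∀ {V W X : Ty → Type} {t} (a : SLC V t) (f : ∀ t, V t → SLC W t)
      (g : ∀ t, W t → SLC X t),
      SLC.bind g (SLC.bind f a) = SLC.bind (fun t v => SLC.bind g (f t v)) a) := by
  refine ⟨fun f _ v => rfl, fun a => SLC.bind_var a, fun a f g => SLC.bind_bind f g a⟩
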